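/- arXiv:2108.07003 — 3 statements merged into one kernel-verified Lean document; each statement's English description precedes it below -/
import Mathlib

section
/- Let $u_1,u_2,u_3$ be pairwise distinct complex numbers, $V$ a $3\times 3$ complex matrix, and for $k\in\{1,2,3\}$ define $(V_k)_{ij} = V_{ij}(\delta_{ik}-\delta_{jk})/(u_i-u_j)$ for $i\neq j$, $(V_k)_{ii}=0$. Then for every $k$, all diagonal entries of the commutator $[V,V_k] = VV_k - V_kV$ vanish. -/
open Matrix

theorem stmt1 (u : Fin 3 → ℂ) (hu : ∀ i j : Fin 3, i ≠ j → u i ≠ u j)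
    (V : Matrix (Fin 3) (Fin 3) ℂ)
    (Vk : Fin 3 → Matrix (Fin 3) (Fin 3) ℂ)
    (hVk : ∀ k i j : Fin 3, Vk k i j =
      if i = j then 0
      else V i j * ((if i = k then (1 : ℂ) else 0) - (if j = k then (1 : ℂ) else 0))
        / (u i - u j)) :
    ∀ k i : Fin 3, (V * Vk k - Vk k * V) i i = 0 := by
  intro k i
  have key : ∀ j, V i j * Vk k j i - Vk k i j * V j i = 0 := by
    intro j
    by_cases h : i = j
    · subst h; simp [hVk]
    · rw [hVk, hVk, if_neg (Ne.symm h), if_neg h]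
      have hne : u i - u j ≠ 0 := sub_ne_zero.mpr (hu i j h)
      have hne' : u j - u i ≠ 0 := sub_ne_zero.mpr (hu j i (Ne.symm h))
      field_simp
      ring
  simp only [Matrix.sub_apply, mul_apply, ← Finset.sum_sub_distrib]
  exact Finset.sum_eq_zero fun j _ => key j
end

section
/- Let $\theta_3, \theta_\infty \in \mathbb{C}$ with $\theta_\infty \neq 0$, and let $y_1, y_3$ be differentiable functions on an open set $\Omega \subseteq \mathbb{C}\setminus\{0\}$ satisfying $y_1' = \frac{\theta_\infty-\theta_3}{2\theta_\infty}(y_1+y_3) + \frac{\theta_\infty-\theta_3}{2z}y_1$ and $y_3' = \frac{\theta_\infty+\theta_3}{2\theta_\infty}(y_1+y_3) - \frac{\theta_\infty+\theta_3}{2z}y_3$. If $w(z) = y_1(z)\, z^{-(\theta_\infty-\theta_3)/2}$ (for a fixed branch of the power on a simply connected $\Omega$), then $w$ satisfies $z\,w'' + (\theta_\infty - z)\,w' - \frac{\theta_\infty-\theta_3}{2}\,w = 0$. -/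
theorem stmt9 (θ3 θinf : ℂ) (hθ : θinf ≠ 0)
    (Ω : Set ℂ) (hΩ : IsOpen Ω) (h0 : (0 : ℂ) ∉ Ω) (hconn : IsPreconnected Ω)
    (y1 y3 d1 d3 g w : ℂ → ℂ)
    (hy1 : ∀ z ∈ Ω, HasDerivAt y1 (d1 z) z)
    (hy3 : ∀ z ∈ Ω, HasDerivAt y3 (d3 z) z)
    (hd1 : ∀ z ∈ Ω, d1 z = (θinf - θ3) / (2 * θinf) * (y1 z + y3 z)
        + (θinf - θ3) / (2 * z) * y1 z)
    (hd3 : ∀ z ∈ Ω, d3 z = (θinf + θ3) / (2 * θinf) * (y1 z + y3 z)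
        - (θinf + θ3) / (2 * z) * y3 z)
    -- g is a fixed branch of z ^ (-(θinf - θ3)/2) on Ω
    (hg : ∀ z ∈ Ω, HasDerivAt g ((-(θinf - θ3) / 2) * g z / z) z)
    (hgne : ∀ z ∈ Ω, g z ≠ 0)
    (hw : ∀ z ∈ Ω, w z = y1 z * g z) :
    ∃ dw : ℂ → ℂ, (∀ z ∈ Ω, HasDerivAt w (dw z) z) ∧
      ∀ z ∈ Ω, ∃ ddw : ℂ, HasDerivAt dw ddw z ∧
        z * ddw + (θinf - z) * dw z - (θinf - θ3) / 2 * w z = 0 := by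
  refine ⟨fun z => (θinf - θ3) / (2 * θinf) * (y1 z + y3 z) * g z, ?_, ?_⟩
  · intro z hz
    have hzne : z ≠ 0 := fun h => h0 (h ▸ hz)
    have h1 : HasDerivAt (fun z => y1 z * g z)
        (d1 z * g z + y1 z * ((-(θinf - θ3) / 2) * g z / z)) z :=
      (hy1 z hz).mul (hg z hz)
    have heq : w =ᶠ[nhds z] fun z => y1 z * g z :=
      Filter.eventuallyEq_of_mem (hΩ.mem_nhds hz) hw
    have h2 := h1.congr_of_eventuallyEq heq
    refine h2.congr_deriv ?_
    rw [hd1 z hz]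
    field_simp
    ring
  · intro z hz
    have hzne : z ≠ 0 := fun h => h0 (h ▸ hz)
    refine ⟨(θinf - θ3) / (2 * θinf) * (d1 z + d3 z) * g z
        + (θinf - θ3) / (2 * θinf) * (y1 z + y3 z) * ((-(θinf - θ3) / 2) * g z / z), ?_, ?_⟩
    · exact (((hy1 z hz).add (hy3 z hz)).const_mul _).mul (hg z hz)
    · rw [hd1 z hz, hd3 z hz, hw z hz]
      beta_reduce
      have h1 : z * z⁻¹ = 1 := mul_inv_cancel₀ hzne
      have h2 : θinf * θinf⁻¹ = 1 := mul_inv_cancel₀ hθ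
      linear_combination (θinf⁻¹ * θinf * (θ3 - θinf) * y3 z * g z / 2) * h1
        + ((θinf - θ3) * y1 z * g z / 2
          + θinf⁻¹ * z * (θinf - θ3) * (y1 z + y3 z) * g z / 2) * h2
end

section
/- Let $a \in \mathbb{C}\setminus\{0,1\}$ (with fixed square roots of $a$ and $a-1$), $x \in \mathbb{C}$ with $1+(a-1)x \neq 0$, and define $\Omega(x) = \frac{1}{1+(a-1)x}\begin{pmatrix} 0 & -ix\sqrt{a(a-1)} & -i\sqrt{a} \\ ix\sqrt{a(a-1)} & 0 & (x-1)\sqrt{a-1} \\ i\sqrt{a} & -(x-1)\sqrt{a-1} & 0 \end{pmatrix}$, $U(x) = \mathrm{diag}(0,x,1)$, and $F(x) = \frac{1}{1+(a-1)x}\begin{pmatrix} a & -i\sqrt{a(a-1)} & -i\sqrt{a} \\ -i\sqrt{a(a-1)} & 1-a & -\sqrt{a-1} \\ -i\sqrt{a} & -\sqrt{a-1} & -1 \end{pmatrix}$ (where $\sqrt{a(a-1)}$ denotes $\sqrt{a}\sqrt{a-1}$). Then the matrix function $Y(z) = \left(I + \frac{F(x)}{z}\right)\mathrm{diag}(1,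 e^{xz}, e^{z})$ satisfies $\frac{dY}{dz} = \left(U(x) + \frac{\Omega(x)}{z}\right)Y$ for all $z\in\mathbb{C}\setminus\{0\}$. -/
open Matrix

attribute [local instance] Matrix.frobeniusNormedAddCommGroup Matrix.frobeniusNormedSpace
attribute [local instance] Matrix.frobeniusNormedRing Matrix.frobeniusNormedAlgebra

set_option maxHeartbeats 1000000 in
theorem stmt17 (a x : ℂ) (ha0 : a ≠ 0) (ha1 : a ≠ 1)
    (hx : 1 + (a - 1) * x ≠ 0)
    (sa sb : ℂ) (hsa : sa ^ 2 = a) (hsb : sb ^ 2 = a - 1)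
    (Ω F U : Matrix (Fin 3) (Fin 3) ℂ)
    (hΩ : Ω = (1 + (a - 1) * x)⁻¹ •
      !![0, -(Complex.I * x * (sa * sb)), -(Complex.I * sa);
         Complex.I * x * (sa * sb), 0, (x - 1) * sb;
         Complex.I * sa, -((x - 1) * sb), 0])
    (hF : F = (1 + (a - 1) * x)⁻¹ •
      !![a, -(Complex.I * (sa * sb)), -(Complex.I * sa);
         -(Complex.I * (sa * sb)), 1 - a, -sb;
         -(Complex.I * sa), -sb, -1])
    (hU : U = Matrix.diagonal ![0, x, 1])
    (Y : ℂ → Matrix (Fin 3) (Fin 3) ℂ)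
    (hY : Y = fun z => (1 + z⁻¹ • F) * Matrix.diagonal ![1, Complex.exp (x * z), Complex.exp z]) :
    ∀ z : ℂ, z ≠ 0 → HasDerivAt Y ((U + z⁻¹ • Ω) * Y z) z := by
  intro z hz
  -- key matrix identities
  have hU' : U = !![0,0,0;0,x,0;0,0,1] := by
    rw [hU]; ext i j; fin_cases i <;> fin_cases j <;>
      simp [Matrix.diagonal, Matrix.vecHead, Matrix.vecTail]
  have hΩ' : Ω = F * U - U * F := by
    subst hΩ hF
    rw [hU', Matrix.smul_mul, Matrix.mul_smul, ← smul_sub]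
    refine congrArg _ ?_
    ext i j
    fin_cases i <;> fin_cases j <;>
      simp [Matrix.mul_apply, Fin.sum_univ_three, Matrix.vecHead, Matrix.vecTail] <;> ring
  have hΩF : Ω * F = -F := by
    subst hΩ hF
    have hMN : (!![0, -(Complex.I * x * (sa * sb)), -(Complex.I * sa);
         Complex.I * x * (sa * sb), 0, (x - 1) * sb;
         Complex.I * sa, -((x - 1) * sb), 0] *
        !![a, -(Complex.I * (sa * sb)), -(Complex.I * sa);
         -(Complex.I * (sa * sb)), 1 - a, -sb;
         -(Complex.I * sa), -sb, -1])
        = (1 + (a - 1) * x) • (-(!![a, -(Complex.I * (sa * sb)), -(Complex.I * sa);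
         -(Complex.I * (sa * sb)), 1 - a, -sb;
         -(Complex.I * sa), -sb, -1])) := by
      ext i j
      fin_cases i <;> fin_cases j <;>
        simp [Matrix.mul_apply, Fin.sum_univ_three, Matrix.vecHead, Matrix.vecTail] <;>
        ring_nf <;>
        simp only [Complex.I_sq, hsa, hsb] <;>
        ring
    rw [Matrix.smul_mul, Matrix.mul_smul, hMN, smul_smul, smul_smul, mul_assoc,
      inv_mul_cancel₀ hx, mul_one, smul_neg]
  -- derivative of the left factor
  have hA : HasDerivAt (fun z : ℂ => (1 : Matrix (Fin 3) (Fin 3) ℂ) + z⁻¹ • F)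
      ((-(z ^ 2)⁻¹) • F) z := by
    exact ((hasDerivAt_inv hz).smul_const F).const_add (1 : Matrix (Fin 3) (Fin 3) ℂ)
  -- derivative of the diagonal factor
  have hdiag : ∀ w : ℂ, (Matrix.diagonal ![1, Complex.exp (x * w), Complex.exp w]
      : Matrix (Fin 3) (Fin 3) ℂ)
      = (!![1,0,0;0,0,0;0,0,0] : Matrix (Fin 3) (Fin 3) ℂ) + (Complex.exp (x * w) • (!![0,0,0;0,1,0;0,0,0] : Matrix (Fin 3) (Fin 3) ℂ) + Complex.exp w • (!![0,0,0;0,0,0;0,0,1] : Matrix (Fin 3) (Fin 3) ℂ)) := by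
    intro w
    ext i j
    fin_cases i <;> fin_cases j <;>
      simp [Matrix.diagonal, Matrix.vecHead, Matrix.vecTail]
  have h1 : HasDerivAt (fun w : ℂ => Complex.exp (x * w)) (x * Complex.exp (x * z)) z := by
    simpa [mul_comm] using (((hasDerivAt_id z).const_mul x).cexp)
  have h2 : HasDerivAt Complex.exp (Complex.exp z) z := Complex.hasDerivAt_exp z
  have hD : HasDerivAt (fun w : ℂ => (Matrix.diagonal ![1, Complex.exp (x * w), Complex.exp w]
      : Matrix (Fin 3) (Fin 3) ℂ))
      ((x * Complex.exp (x * z)) • (!![0,0,0;0,1,0;0,0,0] : Matrix (Fin 3) (Fin 3) ℂ) + Complex.exp z • (!![0,0,0;0,0,0;0,0,1] : Matrix (Fin 3) (Fin 3) ℂ)) z := by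
    have h := ((h1.smul_const (!![0,0,0;0,1,0;0,0,0] : Matrix (Fin 3) (Fin 3) ℂ)).add (h2.smul_const (!![0,0,0;0,0,0;0,0,1] : Matrix (Fin 3) (Fin 3) ℂ))).const_add (!![1,0,0;0,0,0;0,0,0] : Matrix (Fin 3) (Fin 3) ℂ)
    have hfun : (fun w : ℂ => (Matrix.diagonal ![1, Complex.exp (x * w), Complex.exp w]
        : Matrix (Fin 3) (Fin 3) ℂ))
        = fun w => (!![1,0,0;0,0,0;0,0,0] : Matrix (Fin 3) (Fin 3) ℂ) + (Complex.exp (x * w) • (!![0,0,0;0,1,0;0,0,0] : Matrix (Fin 3) (Fin 3) ℂ) + Complex.exp w • (!![0,0,0;0,0,0;0,0,1] : Matrix (Fin 3) (Fin 3) ℂ)) := funext hdiag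
    rw [hfun]
    exact h
  have hUD : U * Matrix.diagonal ![1, Complex.exp (x * z), Complex.exp z]
      = (x * Complex.exp (x * z)) • (!![0,0,0;0,1,0;0,0,0] : Matrix (Fin 3) (Fin 3) ℂ) + Complex.exp z • (!![0,0,0;0,0,0;0,0,1] : Matrix (Fin 3) (Fin 3) ℂ) := by
    rw [hU, Matrix.diagonal_mul_diagonal]
    ext i j
    fin_cases i <;> fin_cases j <;>
      simp [Matrix.diagonal, Matrix.vecHead, Matrix.vecTail]
  -- product rule
  have hmul := hA.mul hD
  rw [hY]
  refine hmul.congr_deriv (Eq.symm ?_)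
  rw [← hUD]
  -- algebraic identity
  have key : (U + z⁻¹ • Ω) * (1 + z⁻¹ • F) = ((-(z ^ 2)⁻¹) • F) + (1 + z⁻¹ • F) * U := by
    have e1 : (U + z⁻¹ • Ω) * (1 + z⁻¹ • F)
        = U + (z⁻¹ • Ω + (z⁻¹ • (U * F) + (z⁻¹ * z⁻¹) • (Ω * F))) := by
      simp only [add_mul, mul_add, mul_one, one_mul, Matrix.smul_mul, Matrix.mul_smul, smul_smul]
      abel
    have e2 : (1 + z⁻¹ • F) * U = U + z⁻¹ • (F * U) := by
      simp only [add_mul, one_mul, Matrix.smul_mul]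
    have hz2 : ((z ^ 2)⁻¹ : ℂ) = z⁻¹ * z⁻¹ := by rw [sq, mul_inv]
    rw [e1, e2, hΩF, hΩ', hz2, smul_sub, smul_neg]
    abel_nf
    rw [smul_assoc]
  calc (U + z⁻¹ • Ω) * ((1 + z⁻¹ • F) * Matrix.diagonal ![1, Complex.exp (x * z), Complex.exp z])
      = ((U + z⁻¹ • Ω) * (1 + z⁻¹ • F)) * Matrix.diagonal ![1, Complex.exp (x * z), Complex.exp z] := by
        rw [mul_assoc]
    _ = (((-(z ^ 2)⁻¹) • F) + (1 + z⁻¹ • F) * U) * Matrix.diagonal ![1, Complex.exp (x * z), Complex.exp z] := by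
        rw [key]
    _ = _ := by rw [add_mul, mul_assoc]
end
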